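/- Let Ḡ, M ∈ ℝ^{m×n} with M ≠ 0, and let V = R f(RᵀM) for some orthogonal R and some map f with f(RᵀM) ≠ 0. Define c = tr(ḠᵀM)/(‖Ḡ‖_F ‖M‖_F) and k = tr(M f(RᵀM)ᵀ Rᵀ)/(‖M‖_F ‖f(RᵀM)‖_F), and assume k ≥ 0. If c < −1/√(1+k²), then ⟨Ḡ, V⟩ = tr(Ḡᵀ V) < 0. -/

import Mathlib

set_option maxHeartbeats 1000000

open Matrix

/-- Frobenius norm. -/
noncomputable def frob {m n : ℕ} (X : Matrix (Fin m) (Fin n) ℝ) : ℝ :=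
  Real.sqrt (∑ i, ∑ j, (X i j) ^ 2)

noncomputable def ip {m n : ℕ} (A B : Matrix (Fin m) (Fin n) ℝ) : ℝ :=
  ∑ i, ∑ j, A i j * B i j

lemma trace_eq_ip {m n : ℕ} (A B : Matrix (Fin m) (Fin n) ℝ) :
    Matrix.trace (Aᵀ * B) = ip A B := by
  simp only [Matrix.trace, Matrix.diag, Matrix.mul_apply, Matrix.transpose_apply, ip]
  rw [Finset.sum_comm]

lemma frob_sq {m n : ℕ} (A : Matrix (Fin m) (Fin n) ℝ) : frob A ^ 2 = ip A A := by
  rw [frob, Real.sq_sqrt (by positivity)]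
  simp [ip, sq]

lemma frob_nonneg {m n : ℕ} (A : Matrix (Fin m) (Fin n) ℝ) : 0 ≤ frob A :=
  Real.sqrt_nonneg _

lemma frob_pos {m n : ℕ} {A : Matrix (Fin m) (Fin n) ℝ} (hA : A ≠ 0) : 0 < frob A := by
  rcases (frob_nonneg A).lt_or_eq with h | h
  · exact h
  · exfalso; apply hA
    have h2 : ip A A = 0 := by rw [← frob_sq, ← h]; ring
    have : ∀ i ∈ Finset.univ, ∀ j ∈ Finset.univ, A i j * A i j = 0 := by
      intro i _ j _
      have h3 := (Finset.sum_eq_zero_iff_of_nonneg (fun i _ =>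
        Finset.sum_nonneg (fun j _ => mul_self_nonneg (A i j)))).mp h2 i (Finset.mem_univ i)
      exact (Finset.sum_eq_zero_iff_of_nonneg (fun j _ => mul_self_nonneg (A i j))).mp h3 j
        (Finset.mem_univ j)
    ext i j
    have := this i (Finset.mem_univ i) j (Finset.mem_univ j)
    simpa [mul_self_eq_zero] using this

lemma ip_cauchy {m n : ℕ} (A B : Matrix (Fin m) (Fin n) ℝ) :
    ip A B ≤ frob A * frob B := by
  have h : ip A B = ∑ p : Fin m × Fin n, A p.1 p.2 * B p.1 p.2 := by
    rw [ip, ← Finset.sum_product']; rfl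
  have hA : frob A = Real.sqrt (∑ p : Fin m × Fin n, (A p.1 p.2) ^ 2) := by
    rw [frob, ← Finset.sum_product']; rfl
  have hB : frob B = Real.sqrt (∑ p : Fin m × Fin n, (B p.1 p.2) ^ 2) := by
    rw [frob, ← Finset.sum_product']; rfl
  rw [h, hA, hB]
  exact Real.sum_mul_le_sqrt_mul_sqrt _ _ _

lemma ip_sub_smul_right {m n : ℕ} (B A M : Matrix (Fin m) (Fin n) ℝ) (a : ℝ) :
    ip B (A - a • M) = ip B A - a * ip B M := by
  simp [ip, Matrix.sub_apply, Matrix.smul_apply, smul_eq_mul, mul_sub,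
    Finset.sum_sub_distrib, Finset.mul_sum]
  ring_nf
  simp [Finset.mul_sum, mul_comm, mul_left_comm]

lemma ip_comm {m n : ℕ} (A B : Matrix (Fin m) (Fin n) ℝ) : ip A B = ip B A := by
  simp [ip, mul_comm]

lemma ip_sub_smul_left {m n : ℕ} (A M B : Matrix (Fin m) (Fin n) ℝ) (a : ℝ) :
    ip (A - a • M) B = ip A B - a * ip M B := by
  simp [ip, Matrix.sub_apply, Matrix.smul_apply, smul_eq_mul, sub_mul,
    Finset.sum_sub_distrib, Finset.mul_sum, mul_assoc]

theorem stmt15 {m n : ℕ} (Gbar M : Matrix (Fin m) (Fin n) ℝ) (hM : M ≠ 0)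
    (R : Matrix (Fin m) (Fin m) ℝ) (hR : Rᵀ * R = 1)
    (f : Matrix (Fin m) (Fin n) ℝ → Matrix (Fin m) (Fin n) ℝ)
    (hf : f (Rᵀ * M) ≠ 0)
    (c k : ℝ)
    (hc : c = Matrix.trace (Gbarᵀ * M) / (frob Gbar * frob M))
    (hk : k = Matrix.trace (M * (f (Rᵀ * M))ᵀ * Rᵀ) / (frob M * frob (f (Rᵀ * M))))
    (hk0 : 0 ≤ k)
    (hcond : c < -1 / Real.sqrt (1 + k ^ 2)) :
    Matrix.trace (Gbarᵀ * (R * f (Rᵀ * M))) < 0 := by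
  set F := f (Rᵀ * M) with hF
  set W := R * F with hW
  -- nonzero norms
  have hμ : 0 < frob M := frob_pos hM
  have hφ : 0 < frob F := frob_pos hf
  have hsqrtpos : 0 < Real.sqrt (1 + k ^ 2) := Real.sqrt_pos.mpr (by positivity)
  have hGne : Gbar ≠ 0 := by
    intro h
    rw [h] at hc
    simp [frob, Matrix.zero_apply] at hc
    rw [hc] at hcond
    have hneg : -1 / Real.sqrt (1 + k ^ 2) < 0 :=
      div_neg_of_neg_of_pos (by norm_num) hsqrtpos
    linarith
  have hg : 0 < frob Gbar := frob_pos hGne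
  set g := frob Gbar
  set μ := frob M
  set φ := frob F
  -- norms identities
  have hWW : ip W W = ip F F := by
    rw [← trace_eq_ip, ← trace_eq_ip, hW, Matrix.transpose_mul, Matrix.mul_assoc,
      ← Matrix.mul_assoc Rᵀ R F, hR, Matrix.one_mul]
  have hfrobW : frob W = φ := by
    have h2 : frob W ^ 2 = frob F ^ 2 := by rw [frob_sq, frob_sq]; exact hWW
    calc frob W = Real.sqrt (frob W ^ 2) := (Real.sqrt_sq (frob_nonneg W)).symm
      _ = Real.sqrt (frob F ^ 2) := by rw [h2]
      _ = φ := Real.sqrt_sq (frob_nonneg F)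
  -- inner-product identities
  have hGM : ip Gbar M = c * (g * μ) := by
    rw [← trace_eq_ip]
    rw [hc]
    field_simp
  have hMW : ip M W = k * (μ * φ) := by
    have h1 : Matrix.trace (M * Fᵀ * Rᵀ) = Matrix.trace (Mᵀ * W) := by
      rw [← Matrix.trace_transpose (M * Fᵀ * Rᵀ)]
      rw [Matrix.transpose_mul, Matrix.transpose_mul, Matrix.transpose_transpose,
        Matrix.transpose_transpose, hW]
      rw [Matrix.trace_mul_comm]
      rw [Matrix.mul_assoc, Matrix.trace_mul_comm, Matrix.mul_assoc]
    rw [← trace_eq_ip, ← h1, hk]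
    field_simp
  -- decomposition
  set α : ℝ := ip Gbar M / μ ^ 2 with hα
  set Gperp := Gbar - α • M with hGp
  have hMM : ip M M = μ ^ 2 := (frob_sq M).symm
  have hμ2 : μ ^ 2 ≠ 0 := by positivity
  have hperpM : ip Gperp M = 0 := by
    rw [hGp, ip_sub_smul_left, hα, hMM]; field_simp; ring
  have hsplitW : ip Gbar W = ip Gperp W + α * ip M W := by
    rw [hGp, ip_sub_smul_left]; ring
  have hperpself : ip Gperp Gperp = g ^ 2 - α ^ 2 * μ ^ 2 := by
    have e1 : ip Gperp Gperp =
        ip Gbar Gbar - α * ip M Gbar - α * (ip Gbar M - α * ip M M) := by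
      rw [hGp, ip_sub_smul_left, ip_sub_smul_right, ip_sub_smul_right]; ring
    have e2 : ip Gbar M = α * μ ^ 2 := by rw [hα]; field_simp
    rw [e1, ip_comm M Gbar, e2, hMM, ← frob_sq]; ring
  set s := frob Gperp with hs
  have hs0 : 0 ≤ s := frob_nonneg _
  have hssq : s ^ 2 = g ^ 2 - α ^ 2 * μ ^ 2 := by rw [hs, frob_sq, hperpself]
  have hαval : α = c * g / μ := by
    rw [hα, hGM]; field_simp
  -- Cauchy–Schwarz bound
  have hCS : ip Gperp W ≤ s * φ := by
    have := ip_cauchy Gperp W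
    rwa [hfrobW] at this
  have hbound : ip Gbar W ≤ s * φ + (c * g / μ) * (k * (μ * φ)) := by
    rw [hsplitW, hMW, hαval]; linarith
  -- numeric part
  have hsq1k : Real.sqrt (1 + k ^ 2) ^ 2 = 1 + k ^ 2 := Real.sq_sqrt (by positivity)
  have hcneg : c < 0 := lt_trans hcond (div_neg_of_neg_of_pos (by norm_num) hsqrtpos)
  have hc2 : c ^ 2 * (1 + k ^ 2) > 1 := by
    have h1 : -c > 1 / Real.sqrt (1 + k ^ 2) := by
      have := hcond; rw [neg_div] at this; linarith
    have h2 : (0:ℝ) < 1 / Real.sqrt (1 + k ^ 2) := by positivity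
    have h3 : (1 / Real.sqrt (1 + k ^ 2)) ^ 2 < c ^ 2 := by
      have hp := mul_pos (show (0:ℝ) < -c - 1 / Real.sqrt (1 + k ^ 2) by linarith)
        (show (0:ℝ) < -c + 1 / Real.sqrt (1 + k ^ 2) by linarith)
      nlinarith [hp]
    have h4 : (1 / Real.sqrt (1 + k ^ 2)) ^ 2 = 1 / (1 + k ^ 2) := by
      rw [div_pow, hsq1k, one_pow]
    rw [h4] at h3
    have hpos : (0:ℝ) < 1 + k ^ 2 := by positivity
    exact (div_lt_iff₀ hpos).mp h3
  have hc2le : c ^ 2 ≤ 1 := by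
    have h5 : α ^ 2 * μ ^ 2 = c ^ 2 * g ^ 2 := by
      rw [hαval]; field_simp
    nlinarith [sq_nonneg s, pow_pos hg 2, hssq]
  have hkey : s + c * g * k < 0 := by
    have h5 : α ^ 2 * μ ^ 2 = c ^ 2 * g ^ 2 := by
      rw [hαval]; field_simp
    have hssq' : s ^ 2 = g ^ 2 * (1 - c ^ 2) := by rw [hssq, h5]; ring
    have hcgk : 0 ≤ -(c * g * k) := by
      have := mul_nonneg (mul_nonneg (neg_nonneg.mpr hcneg.le) hg.le) hk0
      linarith [this]
    have hsb : s ^ 2 < (-(c * g * k)) ^ 2 := by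
      nlinarith [mul_lt_mul_of_pos_left hc2 (pow_pos hg 2)]
    have hlt : s < -(c * g * k) := lt_of_pow_lt_pow_left₀ 2 hcgk hsb
    linarith
  have htarget : Matrix.trace (Gbarᵀ * W) = ip Gbar W := trace_eq_ip _ _
  rw [htarget]
  have hfinal : s * φ + (c * g / μ) * (k * (μ * φ)) = φ * (s + c * g * k) := by
    field_simp
  have : φ * (s + c * g * k) < 0 := mul_neg_of_pos_of_neg hφ hkey
  linarith
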